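/- arXiv:2303.18209 — 6 statements merged into one kernel-verified Lean document; each statement's English description precedes it below -/
import Mathlib

section
/- Suppose the data satisfies the persistency of excitation assumption rank([X_0; U]) = mT + n. Let x̄_0 ∈ ℝ^n be any initial state, ū = vec(u(0),…,u(T−1)) ∈ ℝ^{mT} any input sequence, and x̄ = vec(x(1),…,x(T)) ∈ ℝ^{nT} the resulting state trajectory of the system (i.e., x(0) = x̄_0 and x(t+1) = A x(t) + B u(t) for t = 0,…,T−1). Then there exist vectors α and β of appropriate dimensions such that x̄ = X K_U α + X K_0 β, x̄_0 = X_0 K_U α, and ū = U K_0 β. -/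
open Matrix

/-- The full state sequence over times `0, 1, …, T` built from the initial state `x0` and the
subsequent states `x 0 = x(1), …, x (T-1) = x(T)`. -/
def stateSeq {n T : ℕ} (x0 : Fin n → ℝ) (x : Fin T → Fin n → ℝ) : Fin (T + 1) → Fin n → ℝ :=
  Fin.cases x0 x

/-- `(x0, u, x)` is a trajectory of the system `x(t+1) = A x(t) + B u(t)`. -/
def IsTrajectory {n m T : ℕ} (A : Matrix (Fin n) (Fin n) ℝ) (B : Matrix (Fin n) (Fin m) ℝ)
    (x0 : Fin n → ℝ) (u : Fin T → Fin m → ℝ) (x : Fin T → Fin n → ℝ) : Prop :=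
  ∀ t : Fin T, x t = A.mulVec (stateSeq x0 x t.castSucc) + B.mulVec (u t)

/-- The data matrices are generated by `N` experiments of length `T` on the system. -/
def DataGenerated {n m T N : ℕ} (A : Matrix (Fin n) (Fin n) ℝ) (B : Matrix (Fin n) (Fin m) ℝ)
    (X0 : Matrix (Fin n) (Fin N) ℝ) (X : Matrix (Fin T × Fin n) (Fin N) ℝ)
    (U : Matrix (Fin T × Fin m) (Fin N) ℝ) : Prop :=
  ∀ i : Fin N, IsTrajectory A B (fun j => X0 j i) (fun t j => U (t, j) i) (fun t j => X (t, j) i)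

/-- The columns of `Kb` form a basis of `Ker M`: the linear map induced by `Kb` is injective and
its range is exactly the kernel of the linear map induced by `M`. -/
def IsKerBasis {α β γ : Type*} [Fintype β] [Fintype γ]
    (M : Matrix α β ℝ) (Kb : Matrix β γ ℝ) : Prop :=
  Function.Injective Kb.mulVecLin ∧ LinearMap.range Kb.mulVecLin = LinearMap.ker M.mulVecLin

-- auxiliary lemmas

lemma stateSeq_zero {n T : ℕ} (x0 : Fin n → ℝ) (x : Fin T → Fin n → ℝ) :
    stateSeq x0 x 0 = x0 := rfl

lemma stateSeq_succ {n T : ℕ} (x0 : Fin n → ℝ) (x : Fin T → Fin n → ℝ) (t : Fin T) :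
    stateSeq x0 x t.succ = x t := by simp [stateSeq]

lemma stateSeq_sum {n T N : ℕ} (x0 : Fin N → Fin n → ℝ) (x : Fin N → Fin T → Fin n → ℝ)
    (s : Fin (T + 1)) :
    stateSeq (∑ i, x0 i) (fun t j => ∑ i, x i t j) s = ∑ i, stateSeq (x0 i) (x i) s := by
  induction s using Fin.cases with
  | zero => simp [stateSeq]
  | succ t =>
      funext j
      simp [stateSeq_succ, Finset.sum_apply]

lemma traj_unique {n m T : ℕ} {A : Matrix (Fin n) (Fin n) ℝ} {B : Matrix (Fin n) (Fin m) ℝ}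
    {x0 : Fin n → ℝ} {u : Fin T → Fin m → ℝ} {x x' : Fin T → Fin n → ℝ}
    (h1 : IsTrajectory A B x0 u x) (h2 : IsTrajectory A B x0 u x') : x = x' := by
  have key : ∀ s : Fin (T + 1), stateSeq x0 x s = stateSeq x0 x' s := by
    intro s
    induction s using Fin.induction with
    | zero => rfl
    | succ t ih =>
        rw [stateSeq_succ, stateSeq_succ, h1 t, h2 t, ih]
  funext t
  have := key t.succ
  rwa [stateSeq_succ, stateSeq_succ] at this

lemma traj_of_columns {n m T N : ℕ} {A : Matrix (Fin n) (Fin n) ℝ} {B : Matrix (Fin n) (Fin m) ℝ}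
    {X0 : Matrix (Fin n) (Fin N) ℝ} {X : Matrix (Fin T × Fin n) (Fin N) ℝ}
    {U : Matrix (Fin T × Fin m) (Fin N) ℝ}
    (hdata : DataGenerated A B X0 X U) (c : Fin N → ℝ) :
    IsTrajectory A B (X0.mulVec c) (fun t j => U.mulVec c (t, j))
      (fun t j => X.mulVec c (t, j)) := by
  intro t
  have h0 : X0.mulVec c = ∑ i, (fun j => c i * X0 j i) := by
    funext j; simp [Matrix.mulVec, dotProduct, Finset.sum_apply, mul_comm]
  have hx : (fun t j => X.mulVec c (t, j)) = fun s j => ∑ i, c i * X (s, j) i := by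
    funext s j; simp [Matrix.mulVec, dotProduct, mul_comm]
  have hstate : stateSeq (X0.mulVec c) (fun t j => X.mulVec c (t, j)) t.castSucc
      = ∑ i, c i • stateSeq (fun j => X0 j i) (fun s j => X (s, j) i) t.castSucc := by
    rw [h0, hx]
    have := stateSeq_sum (fun i => (fun j => c i * X0 j i))
      (fun i => fun s j => c i * X (s, j) i) t.castSucc
    rw [this]
    congr 1
    funext i
    induction t.castSucc using Fin.cases with
    | zero => funext j; simp [stateSeq]
    | succ s => funext j; simp [stateSeq_succ]
  funext j
  beta_reduce
  have hXc : X.mulVec c (t, j) = ∑ i, c i * X (t, j) i := by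
    simp [Matrix.mulVec, dotProduct, mul_comm]
  rw [hXc]
  have hcol : ∀ i, X (t, j) i
      = A.mulVec (stateSeq (fun j => X0 j i) (fun s j => X (s, j) i) t.castSucc) j
        + B.mulVec (fun k => U (t, k) i) j := by
    intro i
    have := congrFun (hdata i t) j
    simpa using this
  simp only [hcol, mul_add, Finset.sum_add_distrib]
  have hA : ∑ i, c i * A.mulVec (stateSeq (fun j => X0 j i) (fun s j => X (s, j) i) t.castSucc) j
      = A.mulVec (stateSeq (X0.mulVec c) (fun t j => X.mulVec c (t, j)) t.castSucc) j := by
    rw [hstate]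
    simp [Matrix.mulVec, dotProduct, Finset.mul_sum, Finset.sum_apply, Pi.smul_apply]
    rw [Finset.sum_comm]
    congr 1; funext i; congr 1; funext k; ring
  have hB : ∑ i, c i * B.mulVec (fun k => U (t, k) i) j
      = B.mulVec (fun k => U.mulVec c (t, k)) j := by
    simp [Matrix.mulVec, dotProduct, Finset.mul_sum]
    rw [Finset.sum_comm]
    congr 1; funext i; congr 1; funext k; ring
  rw [hA, hB]
  simp

/-- Under persistency of excitation, every trajectory `(x̄0, ū, x̄)` of the
system can be written as `x̄ = X K_U α + X K_0 β`, `x̄0 = X₀ K_U α`, `ū = U K_0 β`. -/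
theorem stmt1 {n m T N p q : ℕ}
    (A : Matrix (Fin n) (Fin n) ℝ) (B : Matrix (Fin n) (Fin m) ℝ)
    (X0 : Matrix (Fin n) (Fin N) ℝ) (X : Matrix (Fin T × Fin n) (Fin N) ℝ)
    (U : Matrix (Fin T × Fin m) (Fin N) ℝ)
    (hdata : DataGenerated A B X0 X U)
    (KU : Matrix (Fin N) (Fin p) ℝ) (K0 : Matrix (Fin N) (Fin q) ℝ)
    (hKU : IsKerBasis U KU) (hK0 : IsKerBasis X0 K0)
    (hPE : (Matrix.fromRows X0 U).rank = m * T + n)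
    (x0bar : Fin n → ℝ) (ubar : Fin T → Fin m → ℝ) (xbar : Fin T → Fin n → ℝ)
    (htraj : IsTrajectory A B x0bar ubar xbar) :
    ∃ (α : Fin p → ℝ) (β : Fin q → ℝ),
      (∀ t j, xbar t j = X.mulVec (KU.mulVec α) (t, j) + X.mulVec (K0.mulVec β) (t, j)) ∧
      x0bar = X0.mulVec (KU.mulVec α) ∧
      (∀ t j, ubar t j = U.mulVec (K0.mulVec β) (t, j)) := by
  -- surjectivity of the stacked matrix
  have hsurj : Function.Surjective (Matrix.fromRows X0 U).mulVecLin := by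
    rw [← LinearMap.range_eq_top]
    apply Submodule.eq_top_of_finrank_eq
    rw [show Module.finrank ℝ (LinearMap.range (Matrix.fromRows X0 U).mulVecLin)
        = (Matrix.fromRows X0 U).rank from rfl, hPE]
    simp [Module.finrank_pi]
    ring
  obtain ⟨g1, hg1⟩ := hsurj (Sum.elim x0bar 0)
  obtain ⟨g2, hg2⟩ := hsurj (Sum.elim 0 (fun tk => ubar tk.1 tk.2))
  rw [Matrix.mulVecLin_apply, Matrix.fromRows_mulVec] at hg1 hg2
  have hX0g1 : X0.mulVec g1 = x0bar := congrArg (fun f => f ∘ Sum.inl) hg1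
  have hUg1 : U.mulVec g1 = 0 := congrArg (fun f => f ∘ Sum.inr) hg1
  have hX0g2 : X0.mulVec g2 = 0 := congrArg (fun f => f ∘ Sum.inl) hg2
  have hUg2 : U.mulVec g2 = fun tk => ubar tk.1 tk.2 := congrArg (fun f => f ∘ Sum.inr) hg2
  -- g1 ∈ ker U, g2 ∈ ker X0
  have hα : ∃ α, KU.mulVec α = g1 := by
    have : g1 ∈ LinearMap.ker U.mulVecLin := by simpa [LinearMap.mem_ker] using hUg1
    rw [← hKU.2] at this
    exact this
  have hβ : ∃ β, K0.mulVec β = g2 := by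
    have : g2 ∈ LinearMap.ker X0.mulVecLin := by simpa [LinearMap.mem_ker] using hX0g2
    rw [← hK0.2] at this
    exact this
  obtain ⟨α, hαe⟩ := hα
  obtain ⟨β, hβe⟩ := hβ
  refine ⟨α, β, ?_, ?_, ?_⟩
  · -- main trajectory equality
    have hc := traj_of_columns hdata (g1 + g2)
    have hx0c : X0.mulVec (g1 + g2) = x0bar := by
      rw [Matrix.mulVec_add, hX0g1, hX0g2]; simp
    have huc : (fun t j => U.mulVec (g1 + g2) (t, j)) = ubar := by
      funext t j
      rw [Matrix.mulVec_add, hUg1, hUg2]; simp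
    rw [hx0c, huc] at hc
    have := traj_unique htraj hc
    intro t j
    rw [congrFun (congrFun this t) j, hαe, hβe]
    simp [Matrix.mulVec_add]
  · rw [hαe, hX0g1]
  · intro t j
    rw [hβe, hUg2]
end

section
/- Let the data matrices X_0, X, U be generated by the system, fix λ ∈ ℝ, and let α, β be vectors of appropriate dimensions. Then [X K_U − W Λ_λ X_0 K_U, X K_0][α; β] = 0 (i.e., X K_U α + X K_0 β = W Λ_λ X_0 K_U α) if and only if the trajectory of the system with initial state x(0) = X_0 K_U α and input sequence u(0),…,u(T−1) given by vec(u(0),…,u(T−1)) = U K_0 β satisfies x(t) = λ^t x(0) for all t = 1,…,T. -/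
open Matrix

/-- `Λ_λ = [I; λI; λ²I; …; λ^T I] ∈ ℝ^{n(T+1) × n}`. -/
def LamMat (T n : ℕ) (lam : ℝ) : Matrix (Fin (T + 1) × Fin n) (Fin n) ℝ :=
  Matrix.of fun p q => lam ^ (p.1 : ℕ) * (if p.2 = q then 1 else 0)

/-- `W = [0_{nT×n}  I_{nT}]`, the matrix extracting the last `nT` rows of `Λ_λ`. -/
def Wmat (T n : ℕ) : Matrix (Fin T × Fin n) (Fin (T + 1) × Fin n) ℝ :=
  Matrix.of fun p q => if q.1 = p.1.succ ∧ q.2 = p.2 then 1 else 0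

/-- The state trajectory of `x(t+1) = A x(t) + B u(t)` from initial state `x0` with input `u`. -/
def trajFrom {n m : ℕ} (A : Matrix (Fin n) (Fin n) ℝ) (B : Matrix (Fin n) (Fin m) ℝ)
    (x0 : Fin n → ℝ) (u : ℕ → Fin m → ℝ) : ℕ → Fin n → ℝ
  | 0 => x0
  | t + 1 => A.mulVec (trajFrom A B x0 u t) + B.mulVec (u t)

lemma sum_mulVec_aux {n μ N : ℕ} (A : Matrix (Fin n) (Fin μ) ℝ) (s : Fin N → Fin μ → ℝ)
    (c : Fin N → ℝ) (j : Fin n) :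
    ∑ i, A.mulVec (s i) j * c i = A.mulVec (fun r => ∑ i, s i r * c i) j := by
  simp only [mulVec, dotProduct, Finset.sum_mul, Finset.mul_sum]
  rw [Finset.sum_comm]
  simp [mul_assoc]

lemma traj_col_aux {n m T N : ℕ}
    (A : Matrix (Fin n) (Fin n) ℝ) (B : Matrix (Fin n) (Fin m) ℝ)
    (X0 : Matrix (Fin n) (Fin N) ℝ) (X : Matrix (Fin T × Fin n) (Fin N) ℝ)
    (U : Matrix (Fin T × Fin m) (Fin N) ℝ)
    (hdata : DataGenerated A B X0 X U) (c : Fin N → ℝ) :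
    ∀ (k : ℕ) (hk : k < T) (j : Fin n),
      X.mulVec c (⟨k, hk⟩, j) =
        trajFrom A B (X0.mulVec c)
          (fun t j => if h : t < T then U.mulVec c (⟨t, h⟩, j) else 0) (k + 1) j := by
  intro k
  induction k with
  | zero =>
    intro hk j
    have h1 : ∀ i : Fin N, X (⟨0, hk⟩, j) i
        = A.mulVec (fun r => X0 r i) j + B.mulVec (fun r => U (⟨0, hk⟩, r) i) j := by
      intro i
      have := congrFun (hdata i ⟨0, hk⟩) j
      simpa [stateSeq] using this
    show ∑ i, X (⟨0, hk⟩, j) i * c i = _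
    simp only [h1, add_mul, Finset.sum_add_distrib, sum_mulVec_aux]
    have hu : (fun r => ∑ i, U (⟨0, hk⟩, r) i * c i)
        = fun r : Fin m => if h : 0 < T then U.mulVec c (⟨0, h⟩, r) else 0 := by
      funext r
      rw [dif_pos hk]
      rfl
    rw [hu]
    rfl
  | succ k ih =>
    intro hk j
    have hk' : k < T := Nat.lt_of_succ_lt hk
    have h1 : ∀ i : Fin N, X (⟨k + 1, hk⟩, j) i
        = A.mulVec (fun r => X (⟨k, hk'⟩, r) i) j
          + B.mulVec (fun r => U (⟨k + 1, hk⟩, r) i) j := by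
      intro i
      have := congrFun (hdata i ⟨k + 1, hk⟩) j
      have hcs : (⟨k + 1, hk⟩ : Fin T).castSucc = Fin.succ ⟨k, hk'⟩ := rfl
      rw [hcs] at this
      simpa [stateSeq] using this
    show ∑ i, X (⟨k + 1, hk⟩, j) i * c i = _
    simp only [h1, add_mul, Finset.sum_add_distrib, sum_mulVec_aux]
    have hx : (fun r => ∑ i, X (⟨k, hk'⟩, r) i * c i) =
        trajFrom A B (X0.mulVec c)
          (fun t j => if h : t < T then U.mulVec c (⟨t, h⟩, j) else 0) (k + 1) :=
      funext fun r => ih hk' r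
    have hu : (fun r => ∑ i, U (⟨k + 1, hk⟩, r) i * c i)
        = fun r : Fin m => if h : k + 1 < T then U.mulVec c (⟨k + 1, h⟩, r) else 0 := by
      funext r
      rw [dif_pos hk]
      rfl
    rw [hx, hu]
    rfl

lemma wmat_lam_aux {T n : ℕ} (lam : ℝ) (v : Fin n → ℝ) (t : Fin T) (j : Fin n) :
    (Wmat T n * LamMat T n lam).mulVec v (t, j) = lam ^ ((t : ℕ) + 1) * v j := by
  have hWL : ∀ r, (Wmat T n * LamMat T n lam) (t, j) r
      = lam ^ ((t : ℕ) + 1) * (if j = r then 1 else 0) := by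
    intro r
    rw [mul_apply, Finset.sum_eq_single (t.succ, j)]
    · simp [Wmat, LamMat]
    · rintro ⟨b1, b2⟩ _ hb
      simp only [Wmat, LamMat, of_apply, ite_mul, one_mul, zero_mul]
      rw [if_neg]
      rintro ⟨h1, h2⟩
      exact hb (by simp [Prod.ext_iff, h1, h2])
    · simp
  simp only [mulVec, dotProduct, hWL, mul_assoc, ite_mul, one_mul, zero_mul, mul_ite, mul_zero,
    mul_one]
  simp [Finset.sum_ite_eq]

lemma ker_basis_aux {α β γ : Type*} [Fintype β] [Fintype γ]
    {M : Matrix α β ℝ} {Kb : Matrix β γ ℝ} (h : IsKerBasis M Kb) (v : γ → ℝ) :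
    M.mulVec (Kb.mulVec v) = 0 := by
  have hm : Kb.mulVec v ∈ LinearMap.ker M.mulVecLin := by
    rw [← h.2]
    exact ⟨v, rfl⟩
  simpa using hm


/-- `X K_U α + X K_0 β = W Λ_λ X₀ K_U α` holds if and only if the trajectory of
the system with initial state `x(0) = X₀ K_U α` and input sequence `vec(u(0),…,u(T-1)) = U K₀ β`
satisfies `x(t) = λ^t x(0)` for all `t = 1, …, T`. -/
theorem stmt4 {n m T N p q : ℕ}
    (A : Matrix (Fin n) (Fin n) ℝ) (B : Matrix (Fin n) (Fin m) ℝ)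
    (X0 : Matrix (Fin n) (Fin N) ℝ) (X : Matrix (Fin T × Fin n) (Fin N) ℝ)
    (U : Matrix (Fin T × Fin m) (Fin N) ℝ)
    (hdata : DataGenerated A B X0 X U)
    (KU : Matrix (Fin N) (Fin p) ℝ) (K0 : Matrix (Fin N) (Fin q) ℝ)
    (hKU : IsKerBasis U KU) (hK0 : IsKerBasis X0 K0)
    (lam : ℝ) (α : Fin p → ℝ) (β : Fin q → ℝ) :
    X.mulVec (KU.mulVec α) + X.mulVec (K0.mulVec β) =
        (Wmat T n * LamMat T n lam).mulVec (X0.mulVec (KU.mulVec α)) ↔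
      (∀ t : Fin T, ∀ j : Fin n,
        trajFrom A B (X0.mulVec (KU.mulVec α))
            (fun t j => if h : t < T then U.mulVec (K0.mulVec β) (⟨t, h⟩, j) else 0)
            ((t : ℕ) + 1) j =
          lam ^ ((t : ℕ) + 1) * X0.mulVec (KU.mulVec α) j) := by
  set a : Fin N → ℝ := KU.mulVec α with ha
  set b : Fin N → ℝ := K0.mulVec β with hb
  have hUa : U.mulVec a = 0 := ker_basis_aux hKU α
  have hX0b : X0.mulVec b = 0 := ker_basis_aux hK0 β
  have hc0 : X0.mulVec (a + b) = X0.mulVec a := by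
    rw [mulVec_add, hX0b, add_zero]
  have hcu : U.mulVec (a + b) = U.mulVec b := by
    rw [mulVec_add, hUa, zero_add]
  have hfun : (fun (t : ℕ) (j : Fin m) =>
        if h : t < T then U.mulVec (a + b) (⟨t, h⟩, j) else 0)
      = fun t j => if h : t < T then U.mulVec b (⟨t, h⟩, j) else 0 := by
    rw [hcu]
  have hlhs : X.mulVec a + X.mulVec b = X.mulVec (a + b) := (mulVec_add X a b).symm
  constructor
  · intro h t j
    have h2 := congrFun h (t, j)
    have h3 : X.mulVec (a + b) (t, j) =
        trajFrom A B (X0.mulVec (a + b))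
          (fun t j => if h : t < T then U.mulVec (a + b) (⟨t, h⟩, j) else 0) ((t : ℕ) + 1) j := by
      have := traj_col_aux A B X0 X U hdata (a + b) (t : ℕ) t.isLt j
      simpa using this
    rw [hfun, hc0] at h3
    rw [← h3, ← hlhs, h2, wmat_lam_aux]
  · intro h
    funext tj
    obtain ⟨t, j⟩ := tj
    have h3 : X.mulVec (a + b) (t, j) =
        trajFrom A B (X0.mulVec (a + b))
          (fun t j => if h : t < T then U.mulVec (a + b) (⟨t, h⟩, j) else 0) ((t : ℕ) + 1) j := by
      have := traj_col_aux A B X0 X U hdata (a + b) (t : ℕ) t.isLt j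
      simpa using this
    rw [hfun, hc0] at h3
    rw [hlhs, wmat_lam_aux, h3, h t j]
end

section
/- Let the data matrices X_0, X, U be generated by the system and satisfy the persistency of excitation assumption rank([X_0; U]) = mT + n. Fix λ ∈ ℝ and define the allowable eigenvector subspace from data as P_λ = X_0 K_U [I 0] Ker([X K_U − W Λ_λ X_0 K_U, X K_0]), i.e., P_λ = { X_0 K_U α : there exists β with X K_U α + X K_0 β = W Λ_λ X_0 K_U α }. Then a vector v ∈ ℝ^n belongs to P_λ if and only if there exists an input sequence u(0),…,u(T−1) such that the trajectory of the system with x(0) = v satisfies x(t) = λ^t v for all t = 1,…,T. -/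
open Matrix

lemma traj_congr {n m : ℕ} (A : Matrix (Fin n) (Fin n) ℝ) (B : Matrix (Fin n) (Fin m) ℝ)
    (x0 : Fin n → ℝ) {u u' : ℕ → Fin m → ℝ} :
    ∀ t, (∀ s, s < t → u s = u' s) → trajFrom A B x0 u t = trajFrom A B x0 u' t
  | 0, _ => rfl
  | t + 1, h => by
      simp only [trajFrom, traj_congr A B x0 t (fun s hs => h s (Nat.lt_succ_of_lt hs)),
        h t (Nat.lt_succ_self t)]

lemma data_step {n m T N : ℕ} {A : Matrix (Fin n) (Fin n) ℝ} {B : Matrix (Fin n) (Fin m) ℝ}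
    {X0 : Matrix (Fin n) (Fin N) ℝ} {X : Matrix (Fin T × Fin n) (Fin N) ℝ}
    {U : Matrix (Fin T × Fin m) (Fin N) ℝ}
    (hdata : DataGenerated A B X0 X U) (c : Fin N → ℝ) (tf : Fin T) :
    (fun j => X.mulVec c (tf, j)) =
      A.mulVec (fun k => ∑ i, stateSeq (fun j => X0 j i) (fun t j => X (t, j) i) tf.castSucc k * c i)
        + B.mulVec (fun l => U.mulVec c (tf, l)) := by
  funext j
  have h : ∀ i, X (tf, j) i =
      (∑ k, A j k * stateSeq (fun j' => X0 j' i) (fun t j' => X (t, j') i) tf.castSucc k)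
        + ∑ l, B j l * U (tf, l) i := fun i => congrFun (hdata i tf) j
  simp only [mulVec, dotProduct, Pi.add_apply]
  calc ∑ i, X (tf, j) i * c i
      = ∑ i, ((∑ k, A j k * stateSeq (fun j' => X0 j' i) (fun t j' => X (t, j') i) tf.castSucc k)
          + ∑ l, B j l * U (tf, l) i) * c i := by
        exact Finset.sum_congr rfl fun i _ => by rw [h i]
    _ = (∑ k, A j k * ∑ i, stateSeq (fun j' => X0 j' i) (fun t j' => X (t, j') i) tf.castSucc k * c i)
          + ∑ l, B j l * ∑ i, U (tf, l) i * c i := by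
        simp only [add_mul, Finset.sum_add_distrib, Finset.sum_mul, Finset.mul_sum]
        rw [Finset.sum_comm, Finset.sum_comm (γ := Fin N)]
        congr 1 <;> exact Finset.sum_congr rfl fun _ _ => Finset.sum_congr rfl fun _ _ => by ring

lemma traj_data {n m T N : ℕ} {A : Matrix (Fin n) (Fin n) ℝ} {B : Matrix (Fin n) (Fin m) ℝ}
    {X0 : Matrix (Fin n) (Fin N) ℝ} {X : Matrix (Fin T × Fin n) (Fin N) ℝ}
    {U : Matrix (Fin T × Fin m) (Fin N) ℝ}
    (hdata : DataGenerated A B X0 X U) (c : Fin N → ℝ) :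
    ∀ t : ℕ, ∀ ht : t < T,
      trajFrom A B (X0.mulVec c)
          (fun s j => if hs : s < T then U.mulVec c (⟨s, hs⟩, j) else 0) (t + 1)
        = fun j => X.mulVec c (⟨t, ht⟩, j) := by
  intro t
  induction t with
  | zero =>
    intro ht
    rw [data_step hdata c ⟨0, ht⟩]
    have hcs : (⟨0, ht⟩ : Fin T).castSucc = 0 := by ext; rfl
    show A.mulVec (X0.mulVec c) + B.mulVec _ = _
    congr 1
    · have hb : ((fun s j => if hs : s < T then (U.mulVec c) (⟨s, hs⟩, j) else 0) 0)
          = fun l => (U.mulVec c) (⟨0, ht⟩, l) := by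
        funext l; exact dif_pos ht
      simp only [hb]
  | succ k ih =>
    intro ht
    have hk : k < T := Nat.lt_of_succ_lt ht
    rw [data_step hdata c ⟨k + 1, ht⟩]
    have hcs : (⟨k + 1, ht⟩ : Fin T).castSucc = (⟨k, hk⟩ : Fin T).succ := by ext; rfl
    show A.mulVec (trajFrom A B (X0.mulVec c) _ (k + 1)) + B.mulVec _ = _
    rw [ih hk]
    congr 1
    · have hb : ((fun s j => if hs : s < T then (U.mulVec c) (⟨s, hs⟩, j) else 0) (k + 1))
          = fun l => (U.mulVec c) (⟨k + 1, ht⟩, l) := by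
        funext l; exact dif_pos ht
      simp only [hb]

lemma WLam_mulVec (T n : ℕ) (lam : ℝ) (v : Fin n → ℝ) (t : Fin T) (j : Fin n) :
    (Wmat T n * LamMat T n lam).mulVec v (t, j) = lam ^ ((t : ℕ) + 1) * v j := by
  simp only [mulVec, dotProduct, mul_apply, Wmat, LamMat, Matrix.of_apply,
    Fintype.sum_prod_type, ite_mul, one_mul, zero_mul, mul_ite, mul_zero, mul_one]
  simp [ite_and, Finset.sum_ite_eq, Fin.val_succ, ite_mul]

lemma surj_of_rank {n m T N : ℕ} {X0 : Matrix (Fin n) (Fin N) ℝ}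
    {U : Matrix (Fin T × Fin m) (Fin N) ℝ}
    (hPE : (Matrix.fromRows X0 U).rank = m * T + n) :
    Function.Surjective (Matrix.fromRows X0 U).mulVecLin := by
  rw [← LinearMap.range_eq_top]
  apply Submodule.eq_top_of_finrank_eq
  rw [← Matrix.rank, hPE, Module.finrank_fintype_fun_eq_card]
  simp [Fintype.card_sum, Fintype.card_prod]
  ring

/-- Under persistency of excitation, a vector `v` belongs to the data-driven
allowable eigenvector subspace
`P_λ = { X₀ K_U α : ∃ β, X K_U α + X K₀ β = W Λ_λ X₀ K_U α }`
if and only if there exists an input sequence `u(0), …, u(T-1)` such that the trajectory of the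
system with `x(0) = v` satisfies `x(t) = λ^t v` for all `t = 1, …, T`. -/
theorem stmt5 {n m T N p q : ℕ}
    (A : Matrix (Fin n) (Fin n) ℝ) (B : Matrix (Fin n) (Fin m) ℝ)
    (X0 : Matrix (Fin n) (Fin N) ℝ) (X : Matrix (Fin T × Fin n) (Fin N) ℝ)
    (U : Matrix (Fin T × Fin m) (Fin N) ℝ)
    (hdata : DataGenerated A B X0 X U)
    (KU : Matrix (Fin N) (Fin p) ℝ) (K0 : Matrix (Fin N) (Fin q) ℝ)
    (hKU : IsKerBasis U KU) (hK0 : IsKerBasis X0 K0)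
    (hPE : (Matrix.fromRows X0 U).rank = m * T + n)
    (lam : ℝ) (v : Fin n → ℝ) :
    (∃ (α : Fin p → ℝ) (β : Fin q → ℝ),
        X0.mulVec (KU.mulVec α) = v ∧
        X.mulVec (KU.mulVec α) + X.mulVec (K0.mulVec β) =
          (Wmat T n * LamMat T n lam).mulVec (X0.mulVec (KU.mulVec α))) ↔
      (∃ u : ℕ → Fin m → ℝ, ∀ t : Fin T, ∀ j : Fin n,
        trajFrom A B v u ((t : ℕ) + 1) j = lam ^ ((t : ℕ) + 1) * v j) := by
  constructor
  · rintro ⟨α, β, hv, heq⟩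
    set ξ := KU.mulVec α + K0.mulVec β with hξ
    have hker0 : X0.mulVec (K0.mulVec β) = 0 := by
      have hmem : K0.mulVec β ∈ LinearMap.range K0.mulVecLin := ⟨β, rfl⟩
      rw [hK0.2] at hmem
      simpa [Matrix.mulVecLin_apply] using hmem
    have hX0ξ : X0.mulVec ξ = v := by
      rw [hξ, Matrix.mulVec_add, hker0, add_zero, hv]
    have hXξ : X.mulVec ξ = (Wmat T n * LamMat T n lam).mulVec v := by
      rw [hξ, Matrix.mulVec_add, heq, hv]
    refine ⟨fun s j => if hs : s < T then U.mulVec ξ (⟨s, hs⟩, j) else 0, ?_⟩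
    intro t j
    have htr := congrFun (traj_data hdata ξ (t : ℕ) t.isLt) j
    rw [hX0ξ] at htr
    rw [htr, hXξ]
    exact WLam_mulVec T n lam v ⟨(t : ℕ), t.isLt⟩ j
  · rintro ⟨u, hu⟩
    have hsurj := surj_of_rank hPE
    obtain ⟨c, hc⟩ := hsurj (Sum.elim v (fun pr => u (pr.1 : ℕ) pr.2))
    obtain ⟨c₀, hc₀⟩ := hsurj (Sum.elim v 0)
    have hc' : Sum.elim (X0.mulVec c) (U.mulVec c) = Sum.elim v (fun pr => u (pr.1 : ℕ) pr.2) := by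
      rw [← Matrix.fromRows_mulVec]; exact hc
    have hc₀' : Sum.elim (X0.mulVec c₀) (U.mulVec c₀) = Sum.elim v 0 := by
      rw [← Matrix.fromRows_mulVec]; exact hc₀
    have hc1 : X0.mulVec c = v := funext fun i => congrFun hc' (Sum.inl i)
    have hc2 : U.mulVec c = fun pr => u (pr.1 : ℕ) pr.2 := funext fun pr => congrFun hc' (Sum.inr pr)
    have hc01 : X0.mulVec c₀ = v := funext fun i => congrFun hc₀' (Sum.inl i)
    have hc02 : U.mulVec c₀ = 0 := funext fun pr => congrFun hc₀' (Sum.inr pr)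
    have hkerU : c₀ ∈ LinearMap.ker U.mulVecLin := by
      rw [LinearMap.mem_ker, Matrix.mulVecLin_apply, hc02]
    rw [← hKU.2] at hkerU
    obtain ⟨α, hα⟩ := hkerU
    have hα' : KU.mulVec α = c₀ := hα
    have hkerX0 : c - c₀ ∈ LinearMap.ker X0.mulVecLin := by
      rw [LinearMap.mem_ker, map_sub, Matrix.mulVecLin_apply, Matrix.mulVecLin_apply,
        hc1, hc01, sub_self]
    rw [← hK0.2] at hkerX0
    obtain ⟨β, hβ⟩ := hkerX0
    have hβ' : K0.mulVec β = c - c₀ := hβ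
    have hXα : X0.mulVec (KU.mulVec α) = v := by rw [hα', hc01]
    refine ⟨α, β, hXα, ?_⟩
    have hsum : KU.mulVec α + K0.mulVec β = c := by
      rw [hα', hβ']; abel
    rw [← Matrix.mulVec_add, hsum, hXα]
    funext pj
    obtain ⟨t, j⟩ := pj
    have htr := congrFun (traj_data hdata c (t : ℕ) t.isLt) j
    rw [hc1] at htr
    have hagree : trajFrom A B v (fun s j' => if hs : s < T then U.mulVec c (⟨s, hs⟩, j') else 0)
        ((t : ℕ) + 1) = trajFrom A B v u ((t : ℕ) + 1) := by
      apply traj_congr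
      intro s hs
      have hsT : s < T := Nat.lt_of_le_of_lt (Nat.le_of_lt_succ hs) t.isLt
      funext j'
      rw [dif_pos hsT, hc2]
    rw [WLam_mulVec T n lam v t j]
    rw [show ((⟨(t : ℕ), t.isLt⟩ : Fin T) : Fin T) = t from rfl] at htr
    rw [← htr, hagree]
    exact hu t j
end

section
/- Let the data matrices X_0, X, U be generated by the system, with T ≥ 1. Let K ∈ ℝ^{m×n} and λ ∈ ℝ. Suppose vectors α, β satisfy: (i) X K_U α + X K_0 β = W Λ_λ X_0 K_U α; (ii) (I_T ⊗ K) Z Λ_λ X_0 K_U α + U K_0 β = 0; and (iii) v := X_0 K_U α ≠ 0. Then v is an eigenvector of A − B K with eigenvalue λ, i.e., (A − B K)v = λ v. -/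
open Matrix

/-- `Z = [I_{nT}  0_{nT×n}]`, the matrix extracting the first `nT` rows of `Λ_λ`. -/
def Zmat (T n : ℕ) : Matrix (Fin T × Fin n) (Fin (T + 1) × Fin n) ℝ :=
  Matrix.of fun p q => if q.1 = p.1.castSucc ∧ q.2 = p.2 then 1 else 0

open Kronecker

/-- With `T ≥ 1`, if `α, β` satisfy `X K_U α + X K₀ β = W Λ_λ X₀ K_U α` and
`(I_T ⊗ K) Z Λ_λ X₀ K_U α + U K₀ β = 0`, and `v := X₀ K_U α ≠ 0`, then `v` is an eigenvector of
`A − B K` with eigenvalue `λ`. -/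
theorem stmt8 {n m T N p q : ℕ}
    (A : Matrix (Fin n) (Fin n) ℝ) (B : Matrix (Fin n) (Fin m) ℝ)
    (X0 : Matrix (Fin n) (Fin N) ℝ) (X : Matrix (Fin T × Fin n) (Fin N) ℝ)
    (U : Matrix (Fin T × Fin m) (Fin N) ℝ)
    (hdata : DataGenerated A B X0 X U)
    (KU : Matrix (Fin N) (Fin p) ℝ) (K0 : Matrix (Fin N) (Fin q) ℝ)
    (hKU : IsKerBasis U KU) (hK0 : IsKerBasis X0 K0)
    (hT : 1 ≤ T)
    (K : Matrix (Fin m) (Fin n) ℝ) (lam : ℝ)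
    (α : Fin p → ℝ) (β : Fin q → ℝ)
    (h1 : X.mulVec (KU.mulVec α) + X.mulVec (K0.mulVec β) =
      (Wmat T n * LamMat T n lam).mulVec (X0.mulVec (KU.mulVec α)))
    (h2 : ((1 : Matrix (Fin T) (Fin T) ℝ) ⊗ₖ K * Zmat T n * LamMat T n lam).mulVec
      (X0.mulVec (KU.mulVec α)) + U.mulVec (K0.mulVec β) = 0)
    (v : Fin n → ℝ) (hv : X0.mulVec (KU.mulVec α) = v) (hv0 : v ≠ 0) :
    (A - B * K).mulVec v = lam • v := by
  classical
  set a := KU.mulVec α with ha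
  set b := K0.mulVec β with hb
  have hUa : U.mulVec a = 0 := by
    have hmem : a ∈ LinearMap.ker U.mulVecLin := by
      rw [← hKU.2]; exact ⟨α, rfl⟩
    simpa using hmem
  have hX0b : X0.mulVec b = 0 := by
    have hmem : b ∈ LinearMap.ker X0.mulVecLin := by
      rw [← hK0.2]; exact ⟨β, rfl⟩
    simpa using hmem
  rw [hv] at h1 h2
  set c := a + b with hc
  have hX0c : X0.mulVec c = v := by
    rw [hc, Matrix.mulVec_add, hX0b, add_zero, hv]
  have hUc : U.mulVec c = U.mulVec b := by
    rw [hc, Matrix.mulVec_add, hUa, zero_add]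
  have hXc : X.mulVec c = (Wmat T n * LamMat T n lam).mulVec v := by
    rw [hc, Matrix.mulVec_add, h1]
  have hUb : U.mulVec b =
      -(((1 : Matrix (Fin T) (Fin T) ℝ) ⊗ₖ K * Zmat T n * LamMat T n lam).mulVec v) :=
    eq_neg_of_add_eq_zero_right h2
  set t0 : Fin T := ⟨0, hT⟩ with ht0
  -- value of Λ_λ v
  have hLam : ∀ (sq : Fin (T+1) × Fin n),
      (LamMat T n lam).mulVec v sq = lam ^ (sq.1 : ℕ) * v sq.2 := by
    intro sq
    simp [LamMat, Matrix.mulVec, dotProduct, ite_mul, mul_ite]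
  -- value of W Λ_λ v at (t0, j)
  have hW : ∀ j, (Wmat T n * LamMat T n lam).mulVec v (t0, j) = lam * v j := by
    intro j
    rw [← Matrix.mulVec_mulVec]
    have : (Wmat T n).mulVec ((LamMat T n lam).mulVec v) (t0, j)
        = (LamMat T n lam).mulVec v (t0.succ, j) := by
      simp [Wmat, Matrix.mulVec, dotProduct, Fintype.sum_prod_type, ite_and,
        Finset.sum_ite_eq, Finset.sum_ite_eq']
    rw [this, hLam]
    simp [ht0]
  -- value of (I ⊗ K) Z Λ_λ v at (t0, k)
  have hZ : ∀ k, (((1 : Matrix (Fin T) (Fin T) ℝ) ⊗ₖ K * Zmat T n * LamMat T n lam).mulVec v)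
      (t0, k) = K.mulVec v k := by
    intro k
    rw [← Matrix.mulVec_mulVec, ← Matrix.mulVec_mulVec]
    have hZv : ∀ (tj : Fin T × Fin n),
        (Zmat T n).mulVec ((LamMat T n lam).mulVec v) tj
          = lam ^ (tj.1 : ℕ) * v tj.2 := by
      intro tj
      have : (Zmat T n).mulVec ((LamMat T n lam).mulVec v) tj
          = (LamMat T n lam).mulVec v (tj.1.castSucc, tj.2) := by
        simp [Zmat, Matrix.mulVec, dotProduct, Fintype.sum_prod_type, ite_and,
          Finset.sum_ite_eq, Finset.sum_ite_eq']
      rw [this, hLam]; simp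
    have : ((1 : Matrix (Fin T) (Fin T) ℝ) ⊗ₖ K).mulVec
        ((Zmat T n).mulVec ((LamMat T n lam).mulVec v)) (t0, k)
        = ∑ j, K k j * ((Zmat T n).mulVec ((LamMat T n lam).mulVec v) (t0, j)) := by
      simp [Matrix.mulVec, dotProduct, Fintype.sum_prod_type, Matrix.one_apply,
        ite_mul, Finset.sum_ite_eq, Finset.sum_ite_eq', mul_assoc]
    rw [this]
    simp only [hZv]
    simp [ht0, Matrix.mulVec, dotProduct]
  -- dynamics at time 0
  have hcs : (t0.castSucc : Fin (T+1)) = 0 := rfl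
  have hdyn : ∀ j, X.mulVec c (t0, j)
      = A.mulVec (X0.mulVec c) j + B.mulVec (fun k => U.mulVec c (t0, k)) j := by
    intro j
    have hcol : ∀ i, X (t0, j) i
        = (∑ k, A j k * X0 k i) + ∑ k, B j k * U (t0, k) i := by
      intro i
      have h := congrFun (hdata i t0) j
      simpa [stateSeq, hcs, Matrix.mulVec, dotProduct] using h
    simp only [Matrix.mulVec, dotProduct]
    calc ∑ i, X (t0, j) i * c i
        = ∑ i, ((∑ k, A j k * (X0 k i * c i)) + ∑ k, B j k * (U (t0, k) i * c i)) := by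
          refine Finset.sum_congr rfl fun i _ => ?_
          rw [hcol i, add_mul, Finset.sum_mul, Finset.sum_mul]
          simp [mul_assoc]
      _ = (∑ i, ∑ k, A j k * (X0 k i * c i)) + ∑ i, ∑ k, B j k * (U (t0, k) i * c i) := by
          rw [Finset.sum_add_distrib]
      _ = (∑ k, A j k * ∑ i, X0 k i * c i) + ∑ k, B j k * ∑ i, U (t0, k) i * c i := by
          rw [Finset.sum_comm, Finset.sum_comm (f := fun i k => B j k * (U (t0, k) i * c i))]
          simp [Finset.mul_sum]
  -- combine
  funext j
  have h := hdyn j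
  rw [hXc, hW j, hX0c] at h
  have hu : (fun k => U.mulVec c (t0, k)) = fun k => -(K.mulVec v k) := by
    funext k
    rw [hUc, hUb]
    simp [hZ k]
  rw [hu] at h
  have hB : B.mulVec (fun k => -(K.mulVec v k)) j = -((B * K).mulVec v j) := by
    rw [← Matrix.mulVec_mulVec]
    simp [Matrix.mulVec, dotProduct, Finset.sum_neg_distrib]
  rw [hB] at h
  have : (A - B * K).mulVec v j = A.mulVec v j - (B * K).mulVec v j := by
    rw [Matrix.sub_mulVec]; rfl
  rw [this]
  simp only [Pi.smul_apply, smul_eq_mul]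
  linarith [h]
end

section
/- Let the data matrices X_0, X, U be generated by the system with experiments of length T = 1 (so X ∈ ℝ^{n×N}, U ∈ ℝ^{m×N}, and each column satisfies X e_i = A X_0 e_i + B U e_i), and suppose the persistency of excitation assumption rank([X_0; U]) = m + n holds. Let λ_1,…,λ_n ∈ ℝ and let v_1,…,v_n ∈ ℝ^n be linearly independent. Suppose that for each i there exist vectors α_i, β_i with (X K_U − λ_i X_0 K_U) α_i + X K_0 β_i = 0 and X_0 K_U α_i = v_i. Then the n×n matrix M := X_0 K_U [α_1 … α_n] is invertible, and the feedback gain K := −U K_0 [β_1 … β_n] M^{−1} satisfies (A − B K) v_i = λ_i v_i for every i ∈ {1,…,n}; in particular, A − B K has eigenvalues λ_1,…,λ_n with corresponding eigenvectors v_1,…,v_n. -/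
open Matrix

/-- (Closed-form data-driven eigenstructure assignment, `T = 1` data.)
If the data `X = A X₀ + B U` is persistently exciting, `v_1, …, v_n` are linearly independent,
and for each `i` there are `α_i, β_i` with `(X K_U − λ_i X₀ K_U) α_i + X K₀ β_i = 0` and
`X₀ K_U α_i = v_i`, then `M := X₀ K_U [α_1 ⋯ α_n]` is invertible and
`K := −U K₀ [β_1 ⋯ β_n] M⁻¹` satisfies `(A − B K) v_i = λ_i v_i` for all `i`. -/
theorem stmt10 {n m N p q : ℕ}
    (A : Matrix (Fin n) (Fin n) ℝ) (B : Matrix (Fin n) (Fin m) ℝ)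
    (X0 : Matrix (Fin n) (Fin N) ℝ) (X : Matrix (Fin n) (Fin N) ℝ)
    (U : Matrix (Fin m) (Fin N) ℝ)
    (hdata : X = A * X0 + B * U)
    (KU : Matrix (Fin N) (Fin p) ℝ) (K0 : Matrix (Fin N) (Fin q) ℝ)
    (hKU : IsKerBasis U KU) (hK0 : IsKerBasis X0 K0)
    (hPE : (Matrix.fromRows X0 U).rank = m + n)
    (lam : Fin n → ℝ) (v : Fin n → Fin n → ℝ) (hindep : LinearIndependent ℝ v)
    (α : Fin n → Fin p → ℝ) (β : Fin n → Fin q → ℝ)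
    (hker : ∀ i, X.mulVec (KU.mulVec (α i)) - lam i • X0.mulVec (KU.mulVec (α i)) +
      X.mulVec (K0.mulVec (β i)) = 0)
    (hv : ∀ i, X0.mulVec (KU.mulVec (α i)) = v i) :
    IsUnit (Matrix.of fun r i => X0.mulVec (KU.mulVec (α i)) r) ∧
      ∀ i, (A - B * (-(Matrix.of fun r i => U.mulVec (K0.mulVec (β i)) r) *
          (Matrix.of fun r i => X0.mulVec (KU.mulVec (α i)) r)⁻¹)).mulVec (v i) =
        lam i • v i := by
  set M : Matrix (Fin n) (Fin n) ℝ := Matrix.of fun r i => X0.mulVec (KU.mulVec (α i)) r with hM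
  set W : Matrix (Fin m) (Fin n) ℝ := Matrix.of fun r i => U.mulVec (K0.mulVec (β i)) r with hW
  -- M = (of v)ᵀ
  have hMT : M = (Matrix.of v)ᵀ := by
    ext r i
    rw [hM]
    simp [← hv i]
  have hMunit : IsUnit M := by
    rw [hMT, Matrix.isUnit_transpose]
    exact Matrix.linearIndependent_rows_iff_isUnit.mp hindep
  refine ⟨hMunit, fun i => ?_⟩
  -- U KU = 0 on range, X0 K0 = 0
  have hUKU : ∀ x, U.mulVec (KU.mulVec x) = 0 := by
    intro x
    have : KU.mulVecLin x ∈ LinearMap.ker U.mulVecLin := by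
      rw [← hKU.2]; exact ⟨x, rfl⟩
    simpa [Matrix.mulVecLin_apply] using this
  have hX0K0 : ∀ x, X0.mulVec (K0.mulVec x) = 0 := by
    intro x
    have : K0.mulVecLin x ∈ LinearMap.ker X0.mulVecLin := by
      rw [← hK0.2]; exact ⟨x, rfl⟩
    simpa [Matrix.mulVecLin_apply] using this
  -- eigen relation: A v i - lam i • v i + B (w i) = 0
  have hX : ∀ z : Fin N → ℝ, X.mulVec z = A.mulVec (X0.mulVec z) + B.mulVec (U.mulVec z) := by
    intro z
    rw [hdata]
    simp [Matrix.add_mulVec, Matrix.mulVec_mulVec]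
  have heig : A.mulVec (v i) - lam i • v i + B.mulVec (U.mulVec (K0.mulVec (β i))) = 0 := by
    have h := hker i
    rw [hX, hX, hUKU, hX0K0, hv i] at h
    simpa using h
  -- K v i = - w i
  have hMvi : M.mulVec (Pi.single i 1) = v i := by
    rw [hMT, Matrix.mulVec_single_one]
    rfl
  have hMinv : M⁻¹.mulVec (v i) = Pi.single i 1 := by
    rw [← hMvi, Matrix.mulVec_mulVec, Matrix.nonsing_inv_mul M (Matrix.isUnit_iff_isUnit_det M |>.mp hMunit), Matrix.one_mulVec]
  have hWvi : (W * M⁻¹).mulVec (v i) = U.mulVec (K0.mulVec (β i)) := by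
    rw [← Matrix.mulVec_mulVec, hMinv, Matrix.mulVec_single_one]
    rfl
  have : (A - B * (-W * M⁻¹)).mulVec (v i) =
      A.mulVec (v i) + B.mulVec (U.mulVec (K0.mulVec (β i))) := by
    rw [Matrix.sub_mulVec, Matrix.neg_mul, Matrix.mul_neg, Matrix.neg_mulVec,
      sub_neg_eq_add, ← Matrix.mulVec_mulVec, hWvi]
  rw [this]
  have := heig
  linear_combination (norm := (ext r; simp; ring_nf)) this
end

section
/- Let A ∈ ℝ^{n×n} and B ∈ ℝ^{n×m} with rank(B) = m. Let λ_1,…,λ_n ∈ ℝ and let v_1,…,v_n ∈ ℝ^n be linearly independent vectors such that, for each i, (λ_i I − A) v_i ∈ Im(B) (i.e., each v_i lies in the allowable eigenvector subspace associated with λ_i). Then there exists a unique matrix K ∈ ℝ^{m×n} such that (A − B K) v_i = λ_i v_i for all i ∈ {1,…,n}. -/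
open Matrix

/-- (Uniqueness of feedback for eigenstructure assignment.)
If `rank B = m`, `v_1, …, v_n` are linearly independent, and each `v_i` lies in the allowable
eigenvector subspace associated with `λ_i` (i.e. `(λ_i I − A) v_i ∈ Im(B)`), then there is a
unique `K` such that `(A − B K) v_i = λ_i v_i` for all `i`. -/
theorem stmt11 {n m : ℕ}
    (A : Matrix (Fin n) (Fin n) ℝ) (B : Matrix (Fin n) (Fin m) ℝ)
    (hB : B.rank = m)
    (lam : Fin n → ℝ) (v : Fin n → Fin n → ℝ) (hindep : LinearIndependent ℝ v)
    (hallow : ∀ i, ∃ w : Fin m → ℝ,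
      (lam i • (1 : Matrix (Fin n) (Fin n) ℝ) - A).mulVec (v i) = B.mulVec w) :
    ∃! K : Matrix (Fin m) (Fin n) ℝ,
      ∀ i, (A - B * K).mulVec (v i) = lam i • v i := by
  classical
  -- B has injective mulVec
  have hBinj : Function.Injective B.mulVec := by
    rw [Matrix.mulVec_injective_iff]
    apply linearIndependent_iff_card_eq_finrank_span.2
    rw [Set.finrank, ← Matrix.rank_eq_finrank_span_cols, hB, Fintype.card_fin]
  -- V is the matrix with columns v i
  set V : Matrix (Fin n) (Fin n) ℝ := (Matrix.of v)ᵀ with hVdef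
  have hVunit : IsUnit V := by
    rw [Matrix.isUnit_transpose]
    exact Matrix.linearIndependent_rows_iff_isUnit.mp hindep
  have hVdet : IsUnit V.det := (Matrix.isUnit_iff_isUnit_det V).mp hVunit
  have hVinv : V⁻¹ * V = 1 := Matrix.nonsing_inv_mul V hVdet
  have hVinv' : V * V⁻¹ = 1 := Matrix.mul_nonsing_inv V hVdet
  have hVcol : ∀ i, V.mulVec (Pi.single i 1) = v i := by
    intro i; rw [Matrix.mulVec_single_one]; rfl
  have hVinvcol : ∀ i, V⁻¹.mulVec (v i) = Pi.single i 1 := by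
    intro i
    rw [← hVcol i, Matrix.mulVec_mulVec, hVinv, Matrix.one_mulVec]
  choose w hw using hallow
  set K : Matrix (Fin m) (Fin n) ℝ :=
    (Matrix.of fun (j : Fin m) (i : Fin n) => - w i j) * V⁻¹ with hKdef
  have hKcol : ∀ i, K.mulVec (v i) = - w i := by
    intro i
    rw [hKdef, ← Matrix.mulVec_mulVec, hVinvcol i, Matrix.mulVec_single]
    ext j; simp
  have hKworks : ∀ i, (A - B * K).mulVec (v i) = lam i • v i := by
    intro i
    have h := hw i
    rw [Matrix.sub_mulVec, Matrix.smul_mulVec, Matrix.one_mulVec] at h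
    rw [Matrix.sub_mulVec, ← Matrix.mulVec_mulVec, hKcol i]
    have : B.mulVec (- w i) = - B.mulVec (w i) := by
      rw [Matrix.mulVec_neg]
    rw [this, ← h]
    abel
  refine ⟨K, hKworks, ?_⟩
  intro K' hK'
  -- uniqueness
  have hcols : ∀ i, K'.mulVec (v i) = K.mulVec (v i) := by
    intro i
    apply hBinj
    have h1 := hK' i
    have h2 := hKworks i
    rw [Matrix.sub_mulVec, ← Matrix.mulVec_mulVec] at h1 h2
    have := h1.trans h2.symm
    exact sub_right_injective this
  have hKV : K' * V = K * V := by
    ext j i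
    have := congrFun (hcols i) j
    simpa [Matrix.mul_apply, Matrix.mulVec, dotProduct, hVdef,
      mul_comm] using this
  calc K' = K' * V * V⁻¹ := by rw [Matrix.mul_assoc, hVinv', Matrix.mul_one]
    _ = K * V * V⁻¹ := by rw [hKV]
    _ = K := by rw [Matrix.mul_assoc, hVinv', Matrix.mul_one]
end
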